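/- In the mean-reverting-SAV-BDF2 solve, the scalar Bⁿ = 1 + δt² · (3/2 + δt γ)⁻¹ · ⟪[(3/2)I + δt A]⁻¹ N, N⟫ satisfies Bⁿ ≥ 1 whenever A is positive semidefinite self-adjoint, δt > 0, and γ > 0; in particular the scheme's scalar division is well defined. -/

import Mathlib

theorem stmt_11 {E : Type*} [NormedAddCommGroup E] [InnerProductSpace ℝ E]
    [FiniteDimensional ℝ E]
    (A : E →L[ℝ] E)
    (hsa : ∀ x y : E, (inner ℝ (A x) y : ℝ) = (inner ℝ x (A y) : ℝ))
    (hpos : ∀ x : E, 0 ≤ (inner ℝ (A x) x : ℝ))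
    (N : E) (δt γ : ℝ) (hδt : 0 < δt) (hγ : 0 < γ)
    (B : E →L[ℝ] E)
    (hB : ((3/2 : ℝ) • ContinuousLinearMap.id ℝ E + δt • A) ∘L B = ContinuousLinearMap.id ℝ E)
    (hB' : B ∘L ((3/2 : ℝ) • ContinuousLinearMap.id ℝ E + δt • A) = ContinuousLinearMap.id ℝ E) :
    1 ≤ 1 + δt ^ 2 * (3/2 + δt * γ)⁻¹ * (inner ℝ (B N) N : ℝ) := by
  set v := B N with hv
  have hN : N = (3/2 : ℝ) • v + δt • A v := by
    have := congrArg (fun f : E →L[ℝ] E => f N) hB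
    simp only [ContinuousLinearMap.comp_apply, ContinuousLinearMap.id_apply,
      ContinuousLinearMap.add_apply, ContinuousLinearMap.smul_apply] at this
    exact this.symm
  have hinner : (inner ℝ v N : ℝ) = (3/2 : ℝ) * (inner ℝ v v : ℝ) + δt * (inner ℝ v (A v) : ℝ) := by
    rw [hN, inner_add_right, inner_smul_right, inner_smul_right]
  have h1 : (0:ℝ) ≤ inner ℝ v N := by
    rw [hinner]
    have := hpos v
    rw [hsa] at this
    have h2 : (0:ℝ) ≤ inner ℝ v v := real_inner_self_nonneg
    nlinarith
  have h3 : (inner ℝ (B N) N : ℝ) = inner ℝ v N := by rw [hv]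
  have h4 : (0:ℝ) ≤ (3/2 + δt * γ)⁻¹ := by positivity
  nlinarith [sq_nonneg δt, mul_nonneg (mul_nonneg (sq_nonneg δt) h4) (h3 ▸ h1)]
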